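/- Let D be a connected graph, b ∈ V(D), and let β(D,b) be the central bag as defined from the maximal b-canonical clique separations. If K is a clique cutset of the induced subgraph D[β(D,b)], then b ∈ K. -/
import Mathlib


/-- The component `B(K)` of `D \ K` containing `b`. -/
def bComp {V : Type*} (G : SimpleGraph V) (b : V) (K : Set V) : Set V :=
  {v : V | ∃ (hv : v ∈ Kᶜ) (hb : b ∈ Kᶜ), (G.induce Kᶜ).Reachable ⟨b, hb⟩ ⟨v, hv⟩}

/-- `C(K) = N(B(K))`. -/
def cSet {V : Type*} (G : SimpleGraph V) (b : V) (K : Set V) : Set V :=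
  {v : V | v ∉ bComp G b K ∧ ∃ u ∈ bComp G b K, G.Adj u v}

/-- `A(K) = V(D) \ (B(K) ∪ C(K))`. -/
def aSet {V : Type*} (G : SimpleGraph V) (b : V) (K : Set V) : Set V :=
  (bComp G b K ∪ cSet G b K)ᶜ

/-- `K` is a clique not containing `b` whose canonical separation has `A(K)` maximal. -/
def IsMaxSep {V : Type*} (G : SimpleGraph V) (b : V) (K : Set V) : Prop :=
  G.IsClique K ∧ b ∉ K ∧
    ∀ K' : Set V, G.IsClique K' → b ∉ K' → ¬ (aSet G b K ⊂ aSet G b K')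

/-- The central bag `β(D,b) = ⋂_{K maximal} (B(K) ∪ C(K))`. -/
def betaSet {V : Type*} (G : SimpleGraph V) (b : V) : Set V :=
  {v : V | ∀ K : Set V, IsMaxSep G b K → v ∈ bComp G b K ∪ cSet G b K}

section Aux

variable {V : Type*} {G : SimpleGraph V} {b : V} {K K₁ : Set V}

lemma mem_bComp_self (hb : b ∉ K) : b ∈ bComp G b K :=
  ⟨hb, hb, SimpleGraph.Reachable.refl _⟩

lemma not_mem_of_mem_bComp {v : V} (h : v ∈ bComp G b K) : v ∉ K := by
  obtain ⟨hv, -, -⟩ := h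
  exact hv

lemma bComp_extend {u v : V} (hu : u ∈ bComp G b K) (ha : G.Adj u v) (hv : v ∉ K) :
    v ∈ bComp G b K := by
  obtain ⟨hu', hb', hr⟩ := hu
  refine ⟨hv, hb', hr.trans (SimpleGraph.Adj.reachable ?_)⟩
  exact ha

lemma mem_union_of_adj {u v : V} (hu : u ∈ bComp G b K) (ha : G.Adj u v) :
    v ∈ bComp G b K ∪ cSet G b K := by
  by_cases hv : v ∈ bComp G b K
  · exact Or.inl hv
  · exact Or.inr ⟨hv, u, hu, ha⟩

lemma mem_K_of_mem_cSet {v : V} (h : v ∈ cSet G b K) : v ∈ K := by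
  obtain ⟨hv, u, hu, ha⟩ := h
  by_contra hK
  exact hv (bComp_extend hu ha hK)

lemma cSet_of_adj_aSet {x s : V} (hx : x ∈ aSet G b K) (ha : G.Adj s x)
    (hs : s ∉ aSet G b K) : s ∈ cSet G b K := by
  have hs' : s ∈ bComp G b K ∪ cSet G b K := by
    by_contra h
    exact hs h
  rcases hs' with h | h
  · exact absurd (mem_union_of_adj h ha) hx
  · exact h

lemma bComp_avoid {v : V} (U : Set V) (hbU : b ∉ U)
    (hstep : ∀ x ∈ U, ∀ z, G.Adj x z → z ∈ U ∨ z ∈ K) (h : v ∈ bComp G b K) : v ∉ U := by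
  obtain ⟨hv, hb', hr⟩ := h
  obtain ⟨W⟩ := hr
  suffices aux : ∀ {a c : (Kᶜ : Set V)} (_ : (G.induce Kᶜ).Walk a c), (a : V) ∉ U → (c : V) ∉ U by
    exact aux W hbU
  intro a c w
  induction w with
  | nil => exact id
  | @cons a a' c h p ih =>
    intro haU
    apply ih
    by_contra ha'
    have hadj : G.Adj (a' : V) (a : V) := (h : G.Adj (a : V) (a' : V)).symm
    rcases hstep _ ha' _ hadj with h1 | h2
    · exact haU h1
    · exact a.2 h2

lemma subset_aSet_sep (U S : Set V) (hbU : b ∉ U)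
    (hS : S = {s | s ∉ U ∧ ∃ x ∈ U, G.Adj x s}) : U ⊆ aSet G b S := by
  intro x hx
  intro hmem
  rcases hmem with h | h
  · have hstep : ∀ y ∈ U, ∀ z, G.Adj y z → z ∈ U ∨ z ∈ S := by
      intro y hy z hadj
      by_cases hz : z ∈ U
      · exact Or.inl hz
      · exact Or.inr (hS ▸ ⟨hz, y, hy, hadj⟩)
    exact bComp_avoid U hbU hstep h hx
  · have : x ∈ S := mem_K_of_mem_cSet h
    rw [hS] at this
    exact this.1 hx

lemma exists_isMaxSep (hK : G.IsClique K) (hb : b ∉ K) :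
    ∃ K₁, IsMaxSep G b K₁ ∧ aSet G b K ⊆ aSet G b K₁ := by
  set P : Set (Set V) := {A | aSet G b K ⊆ A ∧ ∃ K', G.IsClique K' ∧ b ∉ K' ∧ aSet G b K' = A}
    with hP
  have hKP : aSet G b K ∈ P := ⟨subset_rfl, K, hK, hb, rfl⟩
  have hub : ∀ c ⊆ P, IsChain (· ⊆ ·) c → c.Nonempty → ∃ ub ∈ P, ∀ s ∈ c, s ⊆ ub := by
    intro c hcP hchain hcne
    set U : Set V := ⋃₀ c with hU
    set S : Set V := {s | s ∉ U ∧ ∃ x ∈ U, G.Adj x s} with hSdef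
    have key : ∀ {A : Set V}, A ∈ c → ∀ {x s : V}, x ∈ A → G.Adj x s → s ∉ U →
        ∀ {y t : V}, y ∈ A → G.Adj y t → t ∉ U → s = t ∨ G.Adj s t := by
      intro A hA x s hxA hxs hsU y t hyA hyt htU
      obtain ⟨-, KA, hcA, hbA, haA⟩ := hcP hA
      have hxA' : x ∈ aSet G b KA := haA ▸ hxA
      have hyA' : y ∈ aSet G b KA := haA ▸ hyA
      have hsn : s ∉ aSet G b KA := fun h => hsU ⟨A, hA, haA ▸ h⟩
      have htn : t ∉ aSet G b KA := fun h => htU ⟨A, hA, haA ▸ h⟩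
      have hs : s ∈ cSet G b KA := cSet_of_adj_aSet hxA' hxs.symm hsn
      have ht : t ∈ cSet G b KA := cSet_of_adj_aSet hyA' hyt.symm htn
      by_cases hst : s = t
      · exact Or.inl hst
      · exact Or.inr (hcA (mem_K_of_mem_cSet hs) (mem_K_of_mem_cSet ht) hst)
    have hSclique : G.IsClique S := by
      intro s hs t ht hst
      obtain ⟨hsU, xs, hxsU, haxs⟩ := hs
      obtain ⟨htU, xt, hxtU, haxt⟩ := ht
      obtain ⟨As, hAs, hxAs⟩ := hxsU
      obtain ⟨At, hAt, hxAt⟩ := hxtU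
      have : ∃ A ∈ c, xs ∈ A ∧ xt ∈ A := by
        rcases hchain.total hAs hAt with hle | hle
        · exact ⟨At, hAt, hle hxAs, hxAt⟩
        · exact ⟨As, hAs, hxAs, hle hxAt⟩
      obtain ⟨A, hA, hx1, hx2⟩ := this
      rcases key hA hx1 haxs hsU hx2 haxt htU with he | ha
      · exact absurd he hst
      · exact ha
    have hbU : b ∉ U := by
      rintro ⟨A, hA, hbA⟩
      obtain ⟨-, KA, hcA, hbA', haA⟩ := hcP hA
      exact (haA ▸ hbA : b ∈ aSet G b KA) (Or.inl (mem_bComp_self hbA'))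
    have hbS : b ∉ S := by
      rintro ⟨hbU', x, hxU, hadj⟩
      obtain ⟨A, hA, hxA⟩ := hxU
      obtain ⟨-, KA, hcA, hbA', haA⟩ := hcP hA
      exact (haA ▸ hxA : x ∈ aSet G b KA) (mem_union_of_adj (mem_bComp_self hbA') hadj.symm)
    have hUsub : U ⊆ aSet G b S := subset_aSet_sep U S hbU rfl
    obtain ⟨A1, hA1⟩ := hcne
    refine ⟨aSet G b S, ⟨(hcP hA1).1.trans ((Set.subset_sUnion_of_mem hA1).trans hUsub),
      S, hSclique, hbS, rfl⟩, fun A hA => (Set.subset_sUnion_of_mem hA).trans hUsub⟩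
  obtain ⟨m, hKm, hm⟩ := zorn_subset_nonempty P hub _ hKP
  obtain ⟨hA0m, K₁, hK₁c, hK₁b, hK₁a⟩ := hm.prop
  refine ⟨K₁, ⟨hK₁c, hK₁b, ?_⟩, hK₁a ▸ hKm⟩
  intro K' hc' hb' hss
  rw [hK₁a] at hss
  have hP' : aSet G b K' ∈ P := ⟨hKm.trans hss.subset, K', hc', hb', rfl⟩
  exact hss.not_subset (hm.2 hP' hss.subset)

lemma b_mem_betaSet : b ∈ betaSet G b := by
  intro K' hm
  exact Or.inl (mem_bComp_self hm.2.1)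

lemma betaSet_not_aSet (hK : G.IsClique K) (hb : b ∉ K) {t : V} (ht : t ∈ betaSet G b) :
    t ∉ aSet G b K := by
  obtain ⟨K₁, hm, hsub⟩ := exists_isMaxSep hK hb
  intro hta
  exact (hsub hta) (ht K₁ hm)

lemma mem_aSet_of_not_betaSet {x : V} (hx : x ∉ betaSet G b) :
    ∃ K₁, IsMaxSep G b K₁ ∧ x ∈ aSet G b K₁ := by
  simp only [betaSet, Set.mem_setOf_eq, not_forall] at hx
  obtain ⟨K₁, hm, hxa⟩ := hx
  exact ⟨K₁, hm, hxa⟩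

lemma cSet_max_subset_betaSet (hm : IsMaxSep G b K₁) : cSet G b K₁ ⊆ betaSet G b := by
  intro c hc K' hm'
  by_contra hcB
  have hc' : c ∈ aSet G b K' := hcB
  set U : Set V := aSet G b K₁ ∪ aSet G b K' with hUdef
  set S : Set V := {s | s ∉ U ∧ ∃ x ∈ U, G.Adj x s} with hSdef
  have hbU : b ∉ U := by
    rintro (h | h)
    · exact h (Or.inl (mem_bComp_self hm.2.1))
    · exact h (Or.inl (mem_bComp_self hm'.2.1))
  have hSsub : S ⊆ cSet G b K' := by
    rintro s ⟨hsU, x, hxU, hadj⟩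
    have hsA' : s ∉ aSet G b K' := fun h => hsU (Or.inr h)
    rcases hxU with hx1 | hx2
    · have hsA1 : s ∉ aSet G b K₁ := fun h => hsU (Or.inl h)
      have hs1 : s ∈ cSet G b K₁ := cSet_of_adj_aSet hx1 hadj.symm hsA1
      have hne : s ≠ c := fun h => hsU (Or.inr (h ▸ hc'))
      have hadj_sc : G.Adj s c := hm.1 (mem_K_of_mem_cSet hs1) (mem_K_of_mem_cSet hc) hne
      exact cSet_of_adj_aSet hc' hadj_sc hsA'
    · exact cSet_of_adj_aSet hx2 hadj.symm hsA'
  have hSc : G.IsClique S := hm'.1.subset (hSsub.trans fun _ h => mem_K_of_mem_cSet h)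
  have hbS : b ∉ S := fun h => hm'.2.1 (mem_K_of_mem_cSet (hSsub h))
  have hUsub : U ⊆ aSet G b S := subset_aSet_sep U S hbU rfl
  apply hm.2.2 S hSc hbS
  have hsub : aSet G b K₁ ⊆ aSet G b S := fun t ht => hUsub (Or.inl ht)
  refine HasSubset.Subset.ssubset_of_not_subset hsub ?_
  intro hba
  exact (hba (hUsub (Or.inr hc'))) (Or.inr hc)

lemma run_lemma (hm : IsMaxSep G b K₁) : ∀ {x t : V} (p : G.Walk x t),
    x ∈ aSet G b K₁ → t ∈ betaSet G b →
    ∃ y, ∃ q : G.Walk y t, y ∈ cSet G b K₁ ∧ q.length ≤ p.length ∧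
      ∀ z ∈ q.support, z ∈ p.support := by
  intro x t p
  induction p with
  | nil =>
    intro hx ht
    exact absurd (ht _ hm) hx
  | @cons u v w hadj p ih =>
    intro hx ht
    by_cases hv : v ∈ cSet G b K₁
    · refine ⟨v, p, hv, ?_, ?_⟩
      · rw [SimpleGraph.Walk.length_cons]
        exact Nat.le_succ _
      · intro z hz
        rw [SimpleGraph.Walk.support_cons]
        exact List.mem_cons_of_mem _ hz
    · have hvb : v ∉ bComp G b K₁ := fun h => hx (mem_union_of_adj h hadj.symm)
      have hva : v ∈ aSet G b K₁ := by
        intro hmem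
        rcases hmem with h | h
        · exact hvb h
        · exact hv h
      obtain ⟨y, q, h1, h2, h3⟩ := ih hva ht
      refine ⟨y, q, h1, ?_, ?_⟩
      · rw [SimpleGraph.Walk.length_cons]
        exact h2.trans (Nat.le_succ _)
      · intro z hz
        rw [SimpleGraph.Walk.support_cons]
        exact List.mem_cons_of_mem _ (h3 z hz)

lemma walk_reach : ∀ (n : ℕ) {s t : V} (w : G.Walk s t), w.length ≤ n →
    (∀ x ∈ w.support, x ∉ K) →
    ∀ (hs : s ∈ betaSet G b \ K) (ht : t ∈ betaSet G b \ K),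
    (G.induce (betaSet G b \ K)).Reachable ⟨s, hs⟩ ⟨t, ht⟩ := by
  intro n
  induction n with
  | zero =>
    intro s t w hlen hsupp hs ht
    cases w with
    | nil => exact SimpleGraph.Reachable.refl _
    | cons hadj p => simp [SimpleGraph.Walk.length_cons] at hlen
  | succ n ih =>
    intro s t w hlen hsupp hs ht
    cases w with
    | nil => exact SimpleGraph.Reachable.refl _
    | @cons _ x _ hadj p =>
      rw [SimpleGraph.Walk.length_cons, Nat.succ_le_succ_iff] at hlen
      have hsupp' : ∀ z ∈ p.support, z ∉ K := by
        intro z hz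
        apply hsupp
        rw [SimpleGraph.Walk.support_cons]
        exact List.mem_cons_of_mem _ hz
      by_cases hxβ : x ∈ betaSet G b
      · have hxK : x ∉ K := hsupp' x p.start_mem_support
        have hx' : x ∈ betaSet G b \ K := ⟨hxβ, hxK⟩
        have e : (G.induce (betaSet G b \ K)).Adj ⟨s, hs⟩ ⟨x, hx'⟩ := hadj
        exact e.reachable.trans (ih p hlen hsupp' hx' ht)
      · obtain ⟨K₁, hm, hxa⟩ := mem_aSet_of_not_betaSet hxβ
        have hsn : s ∉ aSet G b K₁ := fun h => h (hs.1 K₁ hm)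
        have hscs : s ∈ cSet G b K₁ := cSet_of_adj_aSet hxa hadj hsn
        obtain ⟨y, q, hycs, hqlen, hqsupp⟩ := run_lemma hm p hxa ht.1
        have hyβ : y ∈ betaSet G b := cSet_max_subset_betaSet hm hycs
        have hyK : y ∉ K := hsupp' y (hqsupp y q.start_mem_support)
        have hy' : y ∈ betaSet G b \ K := ⟨hyβ, hyK⟩
        have hqsupp' : ∀ z ∈ q.support, z ∉ K := fun z hz => hsupp' z (hqsupp z hz)
        have tail : (G.induce (betaSet G b \ K)).Reachable ⟨y, hy'⟩ ⟨t, ht⟩ :=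
          ih q (hqlen.trans hlen) hqsupp' hy' ht
        by_cases hsy : s = y
        · subst hsy
          exact tail
        · have hadj_sy : G.Adj s y :=
            hm.1 (mem_K_of_mem_cSet hscs) (mem_K_of_mem_cSet hycs) hsy
          have e : (G.induce (betaSet G b \ K)).Adj ⟨s, hs⟩ ⟨y, hy'⟩ := hadj_sy
          exact e.reachable.trans tail

end Aux

/-- If `K` is a clique cutset of the induced subgraph on `β(D,b)`, then
`b ∈ K`. -/
theorem stmt_12 {V : Type*} (G : SimpleGraph V) (hG : G.Connected) (b : V)
    (K : Set V) (hK : G.IsClique K) (hKβ : K ⊆ betaSet G b)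
    (u v : V) (hu : u ∈ betaSet G b \ K) (hv : v ∈ betaSet G b \ K) (huv : u ≠ v)
    (hcut : ¬ (G.induce (betaSet G b \ K)).Reachable ⟨u, hu⟩ ⟨v, hv⟩) :
    b ∈ K := by
  by_contra hbK
  have hbβ : b ∈ betaSet G b := b_mem_betaSet
  have hb' : b ∈ betaSet G b \ K := ⟨hbβ, hbK⟩
  have main : ∀ (t : V) (ht : t ∈ betaSet G b \ K),
      (G.induce (betaSet G b \ K)).Reachable ⟨b, hb'⟩ ⟨t, ht⟩ := by
    intro t ht
    have h1 : t ∉ aSet G b K := betaSet_not_aSet hK hbK ht.1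
    have h2 : t ∈ bComp G b K ∪ cSet G b K := by
      by_contra h
      exact h1 h
    have htB : t ∈ bComp G b K := by
      rcases h2 with h | h
      · exact h
      · exact absurd (mem_K_of_mem_cSet h) ht.2
    obtain ⟨htK, hbK', hr⟩ := htB
    obtain ⟨W⟩ := hr
    let f : G.induce (Kᶜ) →g G := ⟨fun a => a.1, fun {a b} h => h⟩
    have hW' : ∀ x ∈ (W.map f).support, x ∉ K := by
      intro x hx
      rw [SimpleGraph.Walk.support_map] at hx
      obtain ⟨a, ha, rfl⟩ := List.mem_map.mp hx
      exact a.2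
    exact walk_reach (W.map f).length (W.map f) le_rfl hW' hb' ht
  exact hcut ((main u hu).symm.trans (main v hv))
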